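/- Let f, g : ℕ → ℝ. Assume that for every n there is a decoder D_n : List Bool → List Bool → Bool such that every DAG r : Fin n → Fin n → Prop (Relation.TransGen r irreflexive) admits labels ℓ : Fin n → List Bool with (ℓ u).length ≤ f(n) for all u, ∑_u (ℓ u).length ≤ n·g(n), and D_n (ℓ u) (ℓ v) = true iff Relation.ReflTransGen r u v. Then there exists a constant C > 0 such that for every n there is a decoder D'_n : List Bool → List Bool → Bool such that every directed graph r : Fin n → Fin n → Prop (not necessarily acyclic) admits labels ℓ' with (ℓ' u).length ≤ f(n) + C·log(n+2) for all u, ∑_u (ℓ' u).length ≤ n·(g(n) + C·log(n+2)), and D'_n (ℓ' u) (ℓ' v) = true iff Relation.ReflTransGen r u v. -/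

import Mathlib

theorem digraphs_reduce_to_dags (f g : ℕ → ℝ)
    (h : ∀ n : ℕ, ∃ D : List Bool → List Bool → Bool,
      ∀ r : Fin n → Fin n → Prop, Irreflexive (Relation.TransGen r) →
        ∃ ℓ : Fin n → List Bool,
          (∀ u : Fin n, ((ℓ u).length : ℝ) ≤ f n) ∧
          (∑ u : Fin n, ((ℓ u).length : ℝ)) ≤ (n : ℝ) * g n ∧
          (∀ u v : Fin n, D (ℓ u) (ℓ v) = true ↔ Relation.ReflTransGen r u v)) :
    ∃ C : ℝ, C > 0 ∧
      ∀ n : ℕ, ∃ D' : List Bool → List Bool → Bool,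
        ∀ r : Fin n → Fin n → Prop,
          ∃ ℓ' : Fin n → List Bool,
            (∀ u : Fin n, ((ℓ' u).length : ℝ) ≤ f n + C * Real.log (n + 2)) ∧
            (∑ u : Fin n, ((ℓ' u).length : ℝ)) ≤ (n : ℝ) * (g n + C * Real.log (n + 2)) ∧
            (∀ u v : Fin n, D' (ℓ' u) (ℓ' v) = true ↔ Relation.ReflTransGen r u v) := by
  have hlog2 : (0:ℝ) < Real.log 2 := Real.log_pos (by norm_num)
  obtain ⟨C, hCpos, hC⟩ : ∃ C : ℝ, 0 < C ∧ ∀ n : ℕ, (Nat.size n : ℝ) ≤ C * Real.log (n + 2) := by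
    refine ⟨2 / Real.log 2, by positivity, ?_⟩
    intro n
    have hlogn2 : Real.log 2 ≤ Real.log (n + 2) := by
      apply Real.log_le_log (by norm_num)
      have : (0:ℝ) ≤ (n:ℝ) := Nat.cast_nonneg n
      linarith
    rcases Nat.eq_zero_or_pos n with h0 | hn
    · subst h0
      simp only [Nat.size_zero, Nat.cast_zero]
      positivity
    · set L := Nat.size n with hL
      have hL1 : 1 ≤ L := Nat.size_pos.mpr hn
      have hpow : 2 ^ (L - 1) ≤ n := Nat.lt_size.mp (by omega)
      have hreal : ((L - 1 : ℕ) : ℝ) * Real.log 2 ≤ Real.log n := by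
        have h1 : ((2:ℝ)) ^ (L - 1) ≤ (n:ℝ) := by
          exact_mod_cast Nat.cast_le.mpr hpow
        calc ((L - 1 : ℕ) : ℝ) * Real.log 2 = Real.log ((2:ℝ) ^ (L - 1)) := by
              rw [Real.log_pow]
          _ ≤ Real.log n := Real.log_le_log (by positivity) h1
      have hlogn : Real.log n ≤ Real.log (n + 2) := by
        apply Real.log_le_log (by exact_mod_cast hn)
        linarith [Nat.cast_nonneg (α := ℝ) n]
      have hcast : ((L - 1 : ℕ) : ℝ) = (L : ℝ) - 1 := by
        push_cast [Nat.cast_sub hL1]; ring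
      rw [hcast] at hreal
      rw [div_mul_eq_mul_div, le_div_iff₀ hlog2]
      nlinarith [hreal, hlogn, hlogn2, hlog2]
  refine ⟨C, hCpos, ?_⟩
  intro n
  obtain ⟨D, hD⟩ := h n
  set L := Nat.size n with hLdef
  have hnL : n < 2 ^ L := Nat.lt_size_self n
  set enc : ℕ → List Bool := fun k => (List.range L).map (fun i => k.testBit i) with henc
  have henclen : ∀ k, (enc k).length = L := by intro k; simp [henc]
  have hencinj : ∀ a b : ℕ, a < 2 ^ L → b < 2 ^ L → enc a = enc b → a = b := by
    intro a b ha hb hab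
    apply Nat.eq_of_testBit_eq
    intro i
    by_cases hi : i < L
    · have h2 := congrArg (fun l : List Bool => l[i]?) hab
      simp only [henc, List.getElem?_map, List.getElem?_range, hi, if_pos, Option.map_some] at h2
      simpa using h2
    · have hia : a < 2 ^ i := lt_of_lt_of_le ha (Nat.pow_le_pow_right (by norm_num) (by omega))
      have hib : b < 2 ^ i := lt_of_lt_of_le hb (Nat.pow_le_pow_right (by norm_num) (by omega))
      rw [Nat.testBit_lt_two_pow hia, Nat.testBit_lt_two_pow hib]
  refine ⟨fun x y => D (x.drop L) (y.drop L) || decide (x.take L = y.take L), ?_⟩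
  intro r
  classical
  set reach := Relation.ReflTransGen r with hreach
  set r' : Fin n → Fin n → Prop := fun u v => reach u v ∧ ¬ reach v u with hr'
  have hr'trans : Transitive r' := by
    rintro a b c ⟨hab, hnba⟩ ⟨hbc, hncb⟩
    exact ⟨hab.trans hbc, fun hca => hncb (hca.trans hab)⟩
  have hdag : Irreflexive (Relation.TransGen r') := by
    intro a ha
    rw [@Relation.transGen_eq_self _ r' ⟨hr'trans⟩] at ha
    exact ha.2 ha.1
  obtain ⟨ℓ, hlen, hsum, hdec⟩ := hD r' hdag
  set S : Fin n → Finset (Fin n) := fun u => Finset.univ.filter (fun w => reach u w ∧ reach w u) with hS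
  have hmemS : ∀ u, u ∈ S u := by
    intro u
    simp only [hS, Finset.mem_filter, Finset.mem_univ, true_and]
    exact ⟨Relation.ReflTransGen.refl, Relation.ReflTransGen.refl⟩
  set rep : Fin n → Fin n := fun u => (S u).min' ⟨u, hmemS u⟩ with hrep
  have hrepS : ∀ u, rep u ∈ S u := fun u => Finset.min'_mem _ _
  have hrepreach : ∀ u, reach u (rep u) ∧ reach (rep u) u := by
    intro u
    have := hrepS u
    simp [hS] at this
    exact this
  have hSeq : ∀ u v : Fin n, reach u v → reach v u → rep u = rep v := by
    intro u v huv hvu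
    have : S u = S v := by
      ext w
      simp only [hS, Finset.mem_filter, Finset.mem_univ, true_and]
      constructor
      · rintro ⟨h1, h2⟩; exact ⟨hvu.trans h1, h2.trans huv⟩
      · rintro ⟨h1, h2⟩; exact ⟨huv.trans h1, h2.trans hvu⟩
    simp [hrep, this]
  set ℓ' : Fin n → List Bool := fun u => enc (rep u) ++ ℓ u with hℓ'
  have hCn := hC n
  refine ⟨ℓ', ?_, ?_, ?_⟩
  · intro u
    have : ((ℓ' u).length : ℝ) = (L : ℝ) + (ℓ u).length := by
      simp [hℓ', henclen]
    rw [this]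
    have := hlen u
    linarith
  · have heach : ∀ u : Fin n, ((ℓ' u).length : ℝ) = (L : ℝ) + (ℓ u).length := by
      intro u; simp [hℓ', henclen]
    calc (∑ u : Fin n, ((ℓ' u).length : ℝ))
        = ∑ u : Fin n, ((L : ℝ) + (ℓ u).length) := by
          exact Finset.sum_congr rfl (fun u _ => heach u)
      _ = (n : ℝ) * L + ∑ u : Fin n, ((ℓ u).length : ℝ) := by
          rw [Finset.sum_add_distrib, Finset.sum_const, Finset.card_univ, Fintype.card_fin]
          ring
      _ ≤ (n : ℝ) * (C * Real.log (n + 2)) + (n : ℝ) * g n := by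
          have := mul_le_mul_of_nonneg_left hCn (Nat.cast_nonneg (α := ℝ) n)
          linarith
      _ = (n : ℝ) * (g n + C * Real.log (n + 2)) := by ring
  · intro u v
    have hdrop : ∀ w : Fin n, (ℓ' w).drop L = ℓ w := by
      intro w
      have : L = (enc (rep w)).length := (henclen _).symm
      rw [hℓ']; simp only; rw [this, List.drop_left]
    have htake : ∀ w : Fin n, (ℓ' w).take L = enc (rep w) := by
      intro w
      have : L = (enc (rep w)).length := (henclen _).symm
      rw [hℓ']; simp only; rw [this, List.take_left]
    simp only [hdrop, htake, Bool.or_eq_true, decide_eq_true_eq]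
    rw [hdec u v]
    constructor
    · rintro (h1 | h2)
      · -- ReflTransGen r' u v → reach u v
        induction h1 with
        | refl => exact Relation.ReflTransGen.refl
        | tail _ hbc ih => exact ih.trans hbc.1
      · have heq : rep u = rep v := Fin.ext
          (hencinj _ _ (lt_of_lt_of_le (rep u).2 (le_of_lt hnL))
            (lt_of_lt_of_le (rep v).2 (le_of_lt hnL)) h2)
        have h1 := hrepreach u
        have h2' := hrepreach v
        rw [heq] at h1
        exact h1.1.trans h2'.2
    · intro huv
      by_cases hvu : reach v u
      · right
        rw [hSeq u v huv hvu]
      · left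
        exact Relation.ReflTransGen.single ⟨huv, hvu⟩
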